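/- For λ > 0 and c ∈ ℝ, the set of minimizers of x ↦ λ|x| + (1/2)(x - c)² is the singleton {sign(c) · max(|c| - λ, 0)} (the soft thresholding operator). -/

import Mathlib

private lemma soft_key (lam : ℝ) (hlam : 0 < lam) (c : ℝ) :
    ∃ g : ℝ, |g| ≤ 1 ∧
      g * (Real.sign c * max (|c| - lam) 0) = |Real.sign c * max (|c| - lam) 0| ∧
      Real.sign c * max (|c| - lam) 0 = c - lam * g := by
  by_cases h : |c| ≤ lam
  · refine ⟨c / lam, ?_, ?_, ?_⟩
    · rw [abs_div, abs_of_pos hlam]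
      exact div_le_one_of_le₀ h hlam.le
    · rw [max_eq_right (by linarith)]; simp
    · rw [max_eq_right (by linarith)]; field_simp; simp
  · push_neg at h
    rcases lt_trichotomy c 0 with hc | hc | hc
    · refine ⟨-1, by norm_num, ?_, ?_⟩
      · rw [Real.sign_of_neg hc, abs_of_neg hc] at *
        rw [max_eq_left (by linarith), abs_of_neg (by nlinarith)]
        ring
      · rw [Real.sign_of_neg hc, abs_of_neg hc] at *
        rw [max_eq_left (by linarith)]
        ring
    · exfalso; simp [hc] at h; linarith
    · refine ⟨1, by norm_num, ?_, ?_⟩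
      · rw [Real.sign_of_pos hc, abs_of_pos hc] at *
        rw [max_eq_left (by linarith), one_mul, abs_of_pos (by linarith)]
      · rw [Real.sign_of_pos hc, abs_of_pos hc] at *
        rw [max_eq_left (by linarith)]
        ring

private lemma soft_opt (lam : ℝ) (hlam : 0 < lam) (c : ℝ) (y : ℝ) :
    lam * |Real.sign c * max (|c| - lam) 0| + (Real.sign c * max (|c| - lam) 0 - c) ^ 2 / 2 ≤
      lam * |y| + (y - c) ^ 2 / 2 := by
  obtain ⟨g, hg1, hgt, hgc⟩ := soft_key lam hlam c
  set t := Real.sign c * max (|c| - lam) 0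
  clear_value t
  have hc : c = t + lam * g := by linarith
  subst hc
  have hy : g * y ≤ |y| := by
    calc g * y ≤ |g * y| := le_abs_self _
      _ = |g| * |y| := abs_mul _ _
      _ ≤ 1 * |y| := mul_le_mul_of_nonneg_right hg1 (abs_nonneg y)
      _ = |y| := one_mul _
  nlinarith [sq_nonneg (y - t), mul_le_mul_of_nonneg_left hy hlam.le, hgt]

theorem soft_thresholding (lam : ℝ) (hlam : 0 < lam) (c : ℝ) :
    {x : ℝ | ∀ y : ℝ, lam * |x| + (x - c) ^ 2 / 2 ≤ lam * |y| + (y - c) ^ 2 / 2}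
      = {Real.sign c * max (|c| - lam) 0} := by
  ext x
  simp only [Set.mem_setOf_eq, Set.mem_singleton_iff]
  constructor
  · intro hx
    set t := Real.sign c * max (|c| - lam) 0 with ht
    have h1 : lam * |t| + (t - c) ^ 2 / 2 ≤ lam * |x| + (x - c) ^ 2 / 2 :=
      soft_opt lam hlam c x
    have h2 := hx t
    have h3 := hx ((x + t) / 2)
    have h4 : |(x + t) / 2| ≤ (|x| + |t|) / 2 := by
      rw [abs_div, abs_two]
      linarith [abs_add_le x t]
    have h5 : (x - t) ^ 2 ≤ 0 := by
      nlinarith [mul_le_mul_of_nonneg_left h4 hlam.le]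
    have h6 : x - t = 0 := by
      have := sq_nonneg (x - t)
      nlinarith
    linarith
  · rintro rfl
    intro y
    exact soft_opt lam hlam c y
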